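/- arXiv:math/0703620 — 4 statements merged into one kernel-verified Lean document; each statement's English description precedes it below -/
import Mathlib

section
/- Let 1 ≤ s ≤ n and let f_1,...,f_s be homogeneous polynomials with f_i ∈ K[x_i,...,x_n] and deg f_s > 0. Then as a K-vector space, the ideal I = (f_1 x_1, f_1 f_2 x_2, ..., f_1⋯f_{s-1} x_{s-1}, f_1⋯f_s) decomposes as the direct sum I = ⊕_{j=1}^{s-1} (f_1⋯f_j x_j)·K[x_j,...,x_n] ⊕ (f_1⋯f_s)·K[x_s,...,x_n]. -/
open MvPolynomial

noncomputable section

variable {K : Type*} [Field K] {n : ℕ}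

/-- Total degree of an exponent vector. -/
def expDeg {n : ℕ} (u : Fin n →₀ ℕ) : ℕ := u.sum fun _ e => e

/-- Binomial coefficient with integer upper argument (0 when negative). -/
def zchoose (x : ℤ) (k : ℕ) : ℕ := if 0 ≤ x then x.toNat.choose k else 0

/-- The critical function of type `a` (indexed so that `a i` is the paper's `a_{i+1}`):
`H(t) = Σ_{i=1}^{s} C(t - a_i + n - i, n - i)`. -/
def critFun (n : ℕ) {s : ℕ} (a : Fin s → ℕ) (t : ℕ) : ℕ :=
  ∑ i : Fin s, zchoose ((t : ℤ) - a i + ((n : ℤ) - (i.val + 1))) (n - (i.val + 1))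

/-- Hilbert function of an ideal: `H(I,t) = dim_K I_t`. -/
def hilb (I : Ideal (MvPolynomial (Fin n) K)) (t : ℕ) : ℕ :=
  Module.finrank K ↥(Submodule.restrictScalars K I ⊓ homogeneousSubmodule (Fin n) K t)

/-- A homogeneous ideal (contains all homogeneous components of its members). -/
def IsHomogeneousIdeal (I : Ideal (MvPolynomial (Fin n) K)) : Prop :=
  ∀ f ∈ I, ∀ m : ℕ, homogeneousComponent m f ∈ I

/-- A monomial ideal. -/
def IsMonomialIdeal (I : Ideal (MvPolynomial (Fin n) K)) : Prop :=
  ∀ f ∈ I, ∀ u ∈ f.support, monomial u (1 : K) ∈ I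

/-- The set of (exponent vectors of) minimal monomial generators of a monomial ideal. -/
def minGens (I : Ideal (MvPolynomial (Fin n) K)) : Set (Fin n →₀ ℕ) :=
  {u | monomial u (1 : K) ∈ I ∧ ∀ v, v ≤ u → v ≠ u → monomial v (1 : K) ∉ I}

/-- `u ≤ v` in the lexicographic order with `x_1 > x_2 > ⋯ > x_n`. -/
def lexLE {n : ℕ} (u v : Fin n →₀ ℕ) : Prop :=
  u = v ∨ ∃ i, u i < v i ∧ ∀ j, j < i → u j = v j

/-- A lexsegment ideal. -/
def IsLexIdeal {N : ℕ} (K : Type*) [Field K] (I : Ideal (MvPolynomial (Fin N) K)) : Prop :=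
  IsMonomialIdeal I ∧ ∀ u v : Fin N →₀ ℕ, monomial u (1 : K) ∈ I →
    expDeg v = expDeg u → lexLE u v → monomial v (1 : K) ∈ I

/-- A universal lexsegment ideal: lexsegment after adjoining any number of variables. -/
def IsUniversalLex (I : Ideal (MvPolynomial (Fin n) K)) : Prop :=
  ∀ m : ℕ, IsLexIdeal K (Ideal.map (rename (Fin.castAdd m) :
    MvPolynomial (Fin n) K →ₐ[K] MvPolynomial (Fin (n + m)) K) I)

/-- The lexsegment subspace of `A_d` spanned by the `m` largest monomials of degree `d`. -/
def lexSpace (K : Type*) [Field K] (n d m : ℕ) : Submodule K (MvPolynomial (Fin n) K) :=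
  Submodule.span K ((fun u => monomial u (1 : K)) ''
    {u : Fin n →₀ ℕ | expDeg u = d ∧ ({v : Fin n →₀ ℕ | expDeg v = d ∧ lexLE u v}.ncard ≤ m)})

/-- `V ⊆ A_d` is a Gotzmann space if `dim A_1·V = dim A_1·Lex(V)`. -/
def IsGotzmannSpace (d : ℕ) (V : Submodule K (MvPolynomial (Fin n) K)) : Prop :=
  Module.finrank K ↥(homogeneousSubmodule (Fin n) K 1 * V) =
    Module.finrank K ↥(homogeneousSubmodule (Fin n) K 1 * lexSpace K n d (Module.finrank K V))

/-- A Gotzmann ideal: homogeneous, with each graded component a Gotzmann space. -/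
def IsGotzmannIdeal (I : Ideal (MvPolynomial (Fin n) K)) : Prop :=
  IsHomogeneousIdeal I ∧ ∀ k : ℕ,
    IsGotzmannSpace k (Submodule.restrictScalars K I ⊓ homogeneousSubmodule (Fin n) K k)

/-- Generators of the canonical critical ideal (`j` is 0-based; the paper's index is `j+1`):
`canGen j = f_1 ⋯ f_{j+1} ⋅ x_{j+1}` for `j + 1 < s`, and `canGen (s-1) = f_1 ⋯ f_s`. -/
def canGen {s : ℕ} (h : s ≤ n) (f : Fin s → MvPolynomial (Fin n) K) (j : Fin s) :
    MvPolynomial (Fin n) K :=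
  (∏ i ∈ Finset.Iic j, f i) * (if (j : ℕ) + 1 < s then X (Fin.castLE h j) else 1)

/-- Canonical critical ideals. -/
def IsCanonicalCritical (I : Ideal (MvPolynomial (Fin n) K)) : Prop :=
  ∃ (s : ℕ) (_ : 1 ≤ s) (h : s ≤ n) (f : Fin s → MvPolynomial (Fin n) K) (d : Fin s → ℕ),
    (∀ i, (f i).IsHomogeneous (d i)) ∧
    (∀ i : Fin s, f i ∈ supported K {k : Fin n | (i : ℕ) ≤ (k : ℕ)}) ∧
    (∀ i : Fin s, (i : ℕ) = s - 1 → 0 < d i) ∧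
    I = Ideal.span (Set.range (canGen h f))

/-- Saturation of an ideal with respect to the irrelevant maximal ideal. -/
def satIdeal (I : Ideal (MvPolynomial (Fin n) K)) : Ideal (MvPolynomial (Fin n) K) :=
  ⨆ k : ℕ, Submodule.colon I (((Ideal.span (Set.range (X : Fin n → MvPolynomial (Fin n) K))) ^ k : Ideal (MvPolynomial (Fin n) K)) : Set (MvPolynomial (Fin n) K))

/-- `I : (x_1, …, x_n) = I`. -/
def IsSaturated (I : Ideal (MvPolynomial (Fin n) K)) : Prop :=
  ∀ f, (∀ i : Fin n, X i * f ∈ I) → f ∈ I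

/-- `m(u)`: the (1-based) index of the largest variable dividing `x^u` (0 for `u = 0`). -/
def maxIdx {n : ℕ} (u : Fin n →₀ ℕ) : ℕ := u.support.sup fun i => (i : ℕ) + 1

/-- A stable monomial ideal. -/
def IsStable (I : Ideal (MvPolynomial (Fin n) K)) : Prop :=
  ∀ u ∈ minGens I, ∀ j ∈ u.support, (∀ k ∈ u.support, k ≤ j) →
    ∀ i : Fin n, i < j →
      monomial (u - Finsupp.single j 1 + Finsupp.single i 1) (1 : K) ∈ I

/-- The linear substitution attached to a matrix. -/
def linSub (M : Matrix (Fin n) (Fin n) K) :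
    MvPolynomial (Fin n) K →ₐ[K] MvPolynomial (Fin n) K :=
  aeval fun i => ∑ j, M i j • X j

/-- `u < v` in the degree reverse lexicographic order with `x_1 > ⋯ > x_n`. -/
def drlLT {n : ℕ} (u v : Fin n →₀ ℕ) : Prop :=
  expDeg u < expDeg v ∨ (expDeg u = expDeg v ∧ ∃ j, v j < u j ∧ ∀ k, j < k → u k = v k)

def IsLeadExp (f : MvPolynomial (Fin n) K) (u : Fin n →₀ ℕ) : Prop :=
  u ∈ f.support ∧ ∀ v ∈ f.support, v ≠ u → drlLT v u

/-- Initial ideal with respect to the degree reverse lexicographic order. -/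
def initIdeal (I : Ideal (MvPolynomial (Fin n) K)) : Ideal (MvPolynomial (Fin n) K) :=
  Ideal.span ((fun u => monomial u (1 : K)) '' {u | ∃ f ∈ I, IsLeadExp f u})

/-- `J` is the (reverse lexicographic) generic initial ideal of `I`: for every coordinate
change in a nonempty Zariski-open subset of `GL_n`, the initial ideal of the transformed
ideal equals `J`. -/
def IsGin (I J : Ideal (MvPolynomial (Fin n) K)) : Prop :=
  ∃ p : MvPolynomial (Fin n × Fin n) K, p ≠ 0 ∧
    ∀ M : Matrix (Fin n) (Fin n) K, IsUnit M.det →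
      MvPolynomial.eval (fun ij => M ij.1 ij.2) p ≠ 0 →
        initIdeal (Ideal.map (linSub M) I) = J

/-- Greedy computation of the Macaulay minimal growth operation `a ↦ a^{MG(d)}`. -/
def mgAux : ℕ → ℕ → ℕ
  | 0, _ => 0
  | d+1, a =>
    if a = 0 then 0 else
      (sSup {y : ℕ | Nat.choose y (d+1) ≤ a} + 1).choose (d+1) +
        mgAux d (a - Nat.choose (sSup {y : ℕ | Nat.choose y (d+1) ≤ a}) (d+1))

/-- `a = Σ_{j=k}^d C(c j + j, j)` is the `d`-th Macaulay representation of `a`. -/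
def IsMacaulayRep (a d k : ℕ) (c : ℕ → ℕ) : Prop :=
  1 ≤ k ∧ k ≤ d ∧ (∀ j, k ≤ j → j < d → c j ≤ c (j + 1)) ∧
    a = ∑ j ∈ Finset.Icc k d, Nat.choose (c j + j) j

/-- `I` has a critical Hilbert function. -/
def HasCriticalHilb (I : Ideal (MvPolynomial (Fin n) K)) : Prop :=
  ∃ (s : ℕ) (_ : 1 ≤ s) (_ : s ≤ n) (a : Fin s → ℕ),
    Monotone a ∧ (∀ i, 0 < a i) ∧ ∀ t, hilb I t = critFun n a t

/-- A critical ideal: a homogeneous ideal with critical Hilbert function. -/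
def IsCriticalIdeal (I : Ideal (MvPolynomial (Fin n) K)) : Prop :=
  IsHomogeneousIdeal I ∧ HasCriticalHilb I

/-- A critical space: the degree-`d` component of some critical ideal. -/
def IsCriticalSpace (d : ℕ) (V : Submodule K (MvPolynomial (Fin n) K)) : Prop :=
  ∃ J : Ideal (MvPolynomial (Fin n) K), IsCriticalIdeal J ∧
    V = Submodule.restrictScalars K J ⊓ homogeneousSubmodule (Fin n) K d

/-- Segmentwise critical numerical function (`s 0 = 0 < s 1 < ⋯ < s L` are the finite
break points; the last segment `[s L, ∞)` plays the role of `s_ℓ = ∞`). -/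
def SegmentwiseCritical (n : ℕ) (H : ℕ → ℕ) : Prop :=
  ∃ (L : ℕ) (s : Fin (L + 1) → ℕ), s 0 = 0 ∧ StrictMono s ∧
    (∀ j : Fin L, ∃ (p : ℕ) (_ : 1 ≤ p) (_ : p ≤ n) (a : Fin p → ℕ),
      Monotone a ∧ (∀ i, 0 < a i) ∧
      ∀ t, s j.castSucc ≤ t → t ≤ s j.succ → H t = critFun n a t) ∧
    (∃ (p : ℕ) (_ : 1 ≤ p) (_ : p ≤ n) (a : Fin p → ℕ),
      Monotone a ∧ (∀ i, 0 < a i) ∧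
      ∀ t, s (Fin.last L) ≤ t → H t = critFun n a t) ∧
    (∀ j : Fin (L + 1), 0 < (j : ℕ) → mgAux (n - 1) (H (s j - 1)) = H (s j))

/-- `ℤ`-indexed graded component of an ideal (as a `K`-subspace). -/
def hcompZ (I : Ideal (MvPolynomial (Fin n) K)) (m : ℤ) : Submodule K (MvPolynomial (Fin n) K) :=
  if 0 ≤ m then Submodule.restrictScalars K I ⊓ homogeneousSubmodule (Fin n) K m.toNat else ⊥

lemma hcompZ_mul_X (I : Ideal (MvPolynomial (Fin n) K)) (k : Fin n) {m m' : ℤ}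
    (h : m + 1 = m') {f : MvPolynomial (Fin n) K} (hf : f ∈ hcompZ I m) :
    X k * f ∈ hcompZ I m' := by
  by_cases hm : 0 ≤ m
  · have hm' : 0 ≤ m' := by omega
    rw [hcompZ, if_pos hm] at hf
    rw [hcompZ, if_pos hm']
    obtain ⟨h1, h2⟩ := hf
    refine ⟨Ideal.mul_mem_left _ _ h1, ?_⟩
    rw [SetLike.mem_coe, mem_homogeneousSubmodule] at h2 ⊢
    have : m'.toNat = 1 + m.toNat := by omega
    rw [this]
    exact (isHomogeneous_X K k).mul h2
  · rw [hcompZ, if_neg hm, Submodule.mem_bot] at hf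
    subst hf
    simp

/-- Multiplication by `x_k` between graded components. -/
def mulXmap (I : Ideal (MvPolynomial (Fin n) K)) (k : Fin n) {m m' : ℤ} (h : m + 1 = m') :
    hcompZ I m →ₗ[K] hcompZ I m' :=
  LinearMap.codRestrict _ ((LinearMap.mulLeft K (X k)).comp (Submodule.subtype _))
    fun c => hcompZ_mul_X I k h c.2

/-- Internal degree-`j` part of the `i`-th term of the Koszul complex tensored with `I`. -/
abbrev KSp (I : Ideal (MvPolynomial (Fin n) K)) (i j : ℕ) : Type _ :=
  {S : Finset (Fin n) // S.card = i} → ↥(hcompZ I ((j : ℤ) - (i : ℤ)))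

def kdiffAux (I : Ideal (MvPolynomial (Fin n) K)) (i : ℕ) {m m' : ℤ} (h : m + 1 = m') :
    ({S : Finset (Fin n) // S.card = i + 1} → ↥(hcompZ I m)) →ₗ[K]
      ({S : Finset (Fin n) // S.card = i} → ↥(hcompZ I m')) :=
  LinearMap.pi fun S => ∑ k : Fin n,
    if hk : k ∈ S.1 then 0 else
      ((-1 : K) ^ ((S.1.filter (fun a => a < k)).card)) •
        ((mulXmap I k h).comp
          (LinearMap.proj (⟨insert k S.1, by
            rw [Finset.card_insert_of_notMem hk, S.2]⟩ :
              {T : Finset (Fin n) // T.card = i + 1})))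

/-- Koszul differential `K_{i+1} → K_i` in internal degree `j`. -/
def kdiff (I : Ideal (MvPolynomial (Fin n) K)) (i j : ℕ) :
    KSp I (i + 1) j →ₗ[K] KSp I i j :=
  kdiffAux I i (m := (j : ℤ) - ((i : ℕ) + 1 : ℕ)) (m' := (j : ℤ) - (i : ℕ)) (by push_cast; ring)

/-- Graded Betti numbers `β_{i,j}(I) = dim_K Tor_i(I,K)_j`, computed via the Koszul complex. -/
def betti (I : Ideal (MvPolynomial (Fin n) K)) : ℕ → ℕ → ℕ
  | 0, j => Module.finrank K (KSp I 0 j) - Module.finrank K ↥(LinearMap.range (kdiff I 0 j))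
  | i+1, j => Module.finrank K ↥(LinearMap.ker (kdiff I i j)) -
      Module.finrank K ↥(LinearMap.range (kdiff I (i + 1) j))

/-- Castelnuovo–Mumford regularity: `max {j : β_{i,i+j}(I) ≠ 0 for some i}`. -/
def reg (I : Ideal (MvPolynomial (Fin n) K)) : ℕ :=
  sSup {r : ℕ | ∃ i, betti I i (i + r) ≠ 0}

/-- `I` has a `d`-linear resolution: generated in degree `d` with regularity `d`. -/
def HasLinearRes (d : ℕ) (I : Ideal (MvPolynomial (Fin n) K)) : Prop :=
  I = Ideal.span ((Submodule.restrictScalars K I ⊓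
      homogeneousSubmodule (Fin n) K d : Submodule K (MvPolynomial (Fin n) K)) : Set _) ∧
    reg I = d

section Aux

variable {s : ℕ} (h : s ≤ n) (f : Fin s → MvPolynomial (Fin n) K)

/-- Cofactor: `canGen k = (∏_{l ≤ j} f l) * wfac j k` for `j ≤ k`. -/
def wfac (j k : Fin s) : MvPolynomial (Fin n) K :=
  (∏ l ∈ Finset.Ioc j k, f l) * (if (k : ℕ) + 1 < s then X (Fin.castLE h k) else 1)

lemma canGen_factor {j k : Fin s} (hjk : j ≤ k) :
    canGen h f k = (∏ l ∈ Finset.Iic j, f l) * wfac h f j k := by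
  unfold canGen wfac
  rw [← mul_assoc, ← Finset.prod_union (by
    rw [Finset.disjoint_left]
    intro a ha ha'
    rw [Finset.mem_Iic] at ha
    rw [Finset.mem_Ioc] at ha'
    exact absurd ha (not_le.mpr ha'.1))]
  congr 1
  apply Finset.prod_congr _ fun _ _ => rfl
  rw [← Finset.coe_inj, Finset.coe_union, Finset.coe_Iic, Finset.coe_Ioc, Finset.coe_Iic,
    Set.Iic_union_Ioc_eq_Iic hjk]

lemma X_mul_canGen {i j : Fin s} (hij : i < j) :
    X (Fin.castLE h i) * canGen h f j = canGen h f i * wfac h f i j := by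
  rw [canGen_factor h f hij.le]
  unfold canGen
  rw [if_pos (by omega : (i : ℕ) + 1 < s)]
  ring

lemma wfac_supported {i j : Fin s} (hij : i < j)
    (hsupp : ∀ i : Fin s, f i ∈ supported K {k : Fin n | (i : ℕ) ≤ (k : ℕ)}) :
    wfac h f i j ∈ supported K {k : Fin n | (i : ℕ) + 1 ≤ (k : ℕ)} := by
  apply Subalgebra.mul_mem
  · apply Subalgebra.prod_mem
    intro l hl
    rw [Finset.mem_Ioc] at hl
    refine supported_mono ?_ (hsupp l)
    intro k hk
    have h1 : (i : ℕ) < (l : ℕ) := hl.1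
    have h2 : (l : ℕ) ≤ (k : ℕ) := hk
    show (i : ℕ) + 1 ≤ (k : ℕ)
    omega
  · split_ifs
    · rw [X_mem_supported]
      exact hij
    · exact one_mem _

/-- The key relation lemma: in any relation `∑ canGen k * g k = 0` with `g k` supported
on variables `≥ k`, every summand vanishes. -/
lemma canGen_keyRel
    (hsupp : ∀ i : Fin s, f i ∈ supported K {k : Fin n | (i : ℕ) ≤ (k : ℕ)})
    (g : Fin s → MvPolynomial (Fin n) K)
    (hg : ∀ k : Fin s, g k ∈ supported K {l : Fin n | (k : ℕ) ≤ (l : ℕ)})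
    (hsum : ∑ k, canGen h f k * g k = 0) :
    ∀ j, canGen h f j * g j = 0 := by
  classical
  by_contra hc
  push_neg at hc
  obtain ⟨j₀, hj₀⟩ := hc
  set T : Finset (Fin s) := Finset.univ.filter (fun k => canGen h f k * g k ≠ 0) with hT
  have hTne : T.Nonempty := ⟨j₀, Finset.mem_filter.mpr ⟨Finset.mem_univ _, hj₀⟩⟩
  set j := T.min' hTne with hjdef
  have hjT : canGen h f j * g j ≠ 0 := (Finset.mem_filter.mp (T.min'_mem hTne)).2
  have hmin : ∀ k, k < j → canGen h f k * g k = 0 := by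
    intro k hk
    by_contra hne
    exact absurd (T.min'_le k (Finset.mem_filter.mpr ⟨Finset.mem_univ _, hne⟩))
      (not_le.mpr hk)
  have hsum2 : ∑ k ∈ Finset.Ici j, canGen h f k * g k = 0 := by
    rw [Finset.sum_subset (Finset.subset_univ _) (fun k _ hk =>
      hmin k (by rwa [Finset.mem_Ici, not_le] at hk))]
    exact hsum
  set P := ∏ l ∈ Finset.Iic j, f l with hPdef
  have hP : P ≠ 0 := by
    intro h0
    apply hjT
    rw [canGen_factor h f (le_refl j), ← hPdef, h0, zero_mul, zero_mul]
  have hfac : ∑ k ∈ Finset.Ici j, canGen h f k * g k =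
      P * ∑ k ∈ Finset.Ici j, wfac h f j k * g k := by
    rw [Finset.mul_sum]
    refine Finset.sum_congr rfl fun k hk => ?_
    rw [canGen_factor h f (Finset.mem_Ici.mp hk), ← hPdef, mul_assoc]
  have hQ : ∑ k ∈ Finset.Ici j, wfac h f j k * g k = 0 := by
    rcases mul_eq_zero.mp (hfac ▸ hsum2) with h' | h'
    · exact absurd h' hP
    · exact h'
  have hsplit : wfac h f j j * g j + ∑ k ∈ Finset.Ioi j, wfac h f j k * g k = 0 := by
    rw [← Finset.Ici_erase]
    exact (Finset.add_sum_erase _ (fun k => wfac h f j k * g k)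
      (Finset.mem_Ici.mpr (le_refl j))).trans hQ
  have hwjj : wfac h f j j = if (j : ℕ) + 1 < s then X (Fin.castLE h j) else 1 := by
    unfold wfac
    rw [Finset.Ioc_self, Finset.prod_empty, one_mul]
  set R := ∑ k ∈ Finset.Ioi j, wfac h f j k * g k with hRdef
  have hR : R ∈ supported K {l : Fin n | (j : ℕ) + 1 ≤ (l : ℕ)} := by
    apply Subalgebra.sum_mem
    intro k hk
    rw [Finset.mem_Ioi] at hk
    apply Subalgebra.mul_mem
    · exact wfac_supported h f hk hsupp
    · refine supported_mono ?_ (hg k)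
      intro l hl
      have h1 : (j : ℕ) < (k : ℕ) := hk
      have h2 : (k : ℕ) ≤ (l : ℕ) := hl
      show (j : ℕ) + 1 ≤ (l : ℕ)
      omega
  by_cases hlt : (j : ℕ) + 1 < s
  · have hXg : X (Fin.castLE h j) * g j = -R := by
      rw [hwjj, if_pos hlt] at hsplit
      exact eq_neg_of_add_eq_zero_left hsplit
    have hgj : g j ≠ 0 := right_ne_zero_of_mul hjT
    obtain ⟨u, hu⟩ := ne_zero_iff.mp hgj
    have hmemvars : Fin.castLE h j ∈ (X (Fin.castLE h j) * g j).vars := by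
      rw [mem_vars]
      refine ⟨Finsupp.single (Fin.castLE h j) 1 + u, ?_, ?_⟩
      · rw [mem_support_iff, coeff_X_mul]
        exact hu
      · simp [Finsupp.mem_support_iff]
    have hmem : X (Fin.castLE h j) * g j ∈
        supported K {l : Fin n | (j : ℕ) + 1 ≤ (l : ℕ)} := by
      rw [hXg]; exact neg_mem hR
    rw [mem_supported] at hmem
    have : (j : ℕ) + 1 ≤ ((Fin.castLE h j : Fin n) : ℕ) := hmem hmemvars
    simp at this
  · have hIoi : Finset.Ioi j = ∅ := by
      apply Finset.eq_empty_of_forall_notMem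
      intro k hk
      rw [Finset.mem_Ioi] at hk
      have h1 : (j : ℕ) < (k : ℕ) := hk
      have h2 : (k : ℕ) < s := k.isLt
      omega
    have hR0 : R = 0 := by rw [hRdef, hIoi, Finset.sum_empty]
    rw [hwjj, if_neg hlt, one_mul, hR0, add_zero] at hsplit
    exact hjT (by rw [hsplit, mul_zero])

/-- Absorption: any multiple of `canGen j` lies in the sum of the component spaces. -/
lemma canGen_absorb :
    ∀ (m : ℕ) (j : Fin s), (j : ℕ) < m → ∀ p : MvPolynomial (Fin n) K,
      p * canGen h f j ∈ ⨆ k : Fin s, Submodule.map (LinearMap.mulLeft K (canGen h f k))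
        (Subalgebra.toSubmodule (supported K {l : Fin n | (k : ℕ) ≤ (l : ℕ)})) := by
  intro m
  induction m with
  | zero => intro j hj; omega
  | succ m ih =>
    intro j hj p
    induction p using MvPolynomial.induction_on' with
    | add p q hp hq => rw [add_mul]; exact add_mem hp hq
    | monomial u c =>
      by_cases hcase : ∀ i ∈ u.support, (j : ℕ) ≤ (i : ℕ)
      · have hmem : monomial u c ∈ supported K {l : Fin n | (j : ℕ) ≤ (l : ℕ)} := by
          rw [mem_supported]
          intro x hx
          rw [Finset.mem_coe, mem_vars] at hx
          obtain ⟨v, hv, hxv⟩ := hx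
          classical
          rw [support_monomial] at hv
          split_ifs at hv with hc0
          · exact absurd hv (Finset.notMem_empty _)
          · rw [Finset.mem_singleton] at hv
            subst hv
            exact hcase x hxv
        exact Submodule.mem_iSup_of_mem j ⟨monomial u c, hmem, mul_comm _ _⟩
      · push_neg at hcase
        obtain ⟨i, hiu, hij⟩ := hcase
        set i' : Fin s := ⟨(i : ℕ), lt_trans hij j.isLt⟩ with hi'def
        have hii : Fin.castLE h i' = i := Fin.ext rfl
        have hle : Finsupp.single i 1 ≤ u := by
          rw [Finsupp.single_le_iff]
          have := Finsupp.mem_support_iff.mp hiu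
          omega
        have hdecomp : monomial u c = X i * monomial (u - Finsupp.single i 1) c := by
          conv_lhs => rw [← add_tsub_cancel_of_le hle]
          rw [monomial_single_add, pow_one]
        have hij' : i' < j := hij
        have hX := X_mul_canGen h f hij'
        rw [hii] at hX
        have key : X i * (monomial (u - Finsupp.single i 1) c * canGen h f j) =
            monomial (u - Finsupp.single i 1) c * wfac h f i' j * canGen h f i' := by
          rw [mul_left_comm, hX]; ring
        rw [hdecomp, mul_assoc, key]
        exact ih i' (lt_of_lt_of_le hij (Nat.lt_succ_iff.mp hj)) _

end Aux

/-- Lemma 2.2: the canonical critical ideal is, as a `K`-vector space,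
the direct sum `⊕_{j=1}^{s-1} (f_1⋯f_j x_j)K[x_j,…,x_n] ⊕ (f_1⋯f_s)K[x_s,…,x_n]`. -/
theorem stmt1 {K : Type*} [Field K] {n s : ℕ} (hs1 : 1 ≤ s) (h : s ≤ n)
    (f : Fin s → MvPolynomial (Fin n) K) (d : Fin s → ℕ)
    (hhom : ∀ i, (f i).IsHomogeneous (d i))
    (hsupp : ∀ i : Fin s, f i ∈ supported K {k : Fin n | (i : ℕ) ≤ (k : ℕ)})
    (hlast : ∀ i : Fin s, (i : ℕ) = s - 1 → 0 < d i) :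
    iSupIndep (fun j : Fin s => Submodule.map (LinearMap.mulLeft K (canGen h f j))
      (Subalgebra.toSubmodule (supported K {k : Fin n | (j : ℕ) ≤ (k : ℕ)}))) ∧
    Submodule.restrictScalars K (Ideal.span (Set.range (canGen h f))) =
      ⨆ j : Fin s, Submodule.map (LinearMap.mulLeft K (canGen h f j))
        (Subalgebra.toSubmodule (supported K {k : Fin n | (j : ℕ) ≤ (k : ℕ)})) := by
  classical
  set V : Fin s → Submodule K (MvPolynomial (Fin n) K) := fun j =>
    Submodule.map (LinearMap.mulLeft K (canGen h f j))
      (Subalgebra.toSubmodule (supported K {k : Fin n | (j : ℕ) ≤ (k : ℕ)})) with hVdef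
  have hVmem : ∀ (j : Fin s) (x), x ∈ V j →
      ∃ a ∈ supported K {k : Fin n | (j : ℕ) ≤ (k : ℕ)}, canGen h f j * a = x := by
    intro j x hx
    obtain ⟨a, ha, rfl⟩ := hx
    exact ⟨a, ha, rfl⟩
  constructor
  · -- independence
    intro j
    rw [Submodule.disjoint_def]
    intro x hxj hxrest
    obtain ⟨a, ha, rfl⟩ := hVmem j x hxj
    rw [Submodule.mem_iSup_iff_exists_finsupp] at hxrest
    obtain ⟨c, hc, hcsum⟩ := hxrest
    have hcj : c j = 0 := by
      have := hc j
      rw [iSup_neg (by simp)] at this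
      simpa using this
    have hck : ∀ k, k ≠ j → c k ∈ V k := by
      intro k hk
      have := hc k
      rwa [iSup_pos hk] at this
    have hsumuniv : ∑ k, c k = canGen h f j * a := by
      rw [← hcsum]
      exact (Finsupp.sum_fintype c (fun _ x => x) (fun _ => rfl)).symm
    have hrep : ∀ k : Fin s, ∃ b ∈ supported K {l : Fin n | (k : ℕ) ≤ (l : ℕ)},
        canGen h f k * b = (if k = j then -(canGen h f j * a) else c k) := by
      intro k
      by_cases hk : k = j
      · subst hk
        exact ⟨-a, neg_mem ha, by rw [if_pos rfl, mul_neg]⟩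
      · obtain ⟨b, hb, hbe⟩ := hVmem k _ (hck k hk)
        exact ⟨b, hb, by rw [if_neg hk, hbe]⟩
    choose g hg hge using hrep
    have hzero : ∑ k, canGen h f k * g k = 0 := by
      have heq : ∑ k, canGen h f k * g k =
          ∑ k, (if k = j then -(canGen h f j * a) else c k) :=
        Finset.sum_congr rfl fun k _ => hge k
      rw [heq, ← Finset.add_sum_erase _ _ (Finset.mem_univ j), if_pos rfl,
        Finset.sum_congr rfl (fun k hk => if_neg (Finset.ne_of_mem_erase hk)),
        Finset.sum_erase _ hcj, hsumuniv, neg_add_cancel]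
    have hkey := canGen_keyRel h f hsupp g hg hzero j
    rw [hge j, if_pos rfl] at hkey
    exact neg_eq_zero.mp hkey
  · -- equality of spans
    apply le_antisymm
    · intro x hx
      rw [Submodule.restrictScalars_mem, Ideal.span, Submodule.mem_span_range_iff_exists_fun] at hx
      obtain ⟨c, hc⟩ := hx
      rw [← hc]
      exact Submodule.sum_mem _ fun i _ => by
        rw [smul_eq_mul]
        exact canGen_absorb h f s i i.isLt (c i)
    · rw [iSup_le_iff]
      intro j x hx
      obtain ⟨a, _, rfl⟩ := hVmem j x hx
      rw [Submodule.restrictScalars_mem]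
      exact Ideal.mul_mem_right a _ (Ideal.subset_span (Set.mem_range_self j))
end
end

section
/- Let I be a stable monomial ideal of A = K[x_1,...,x_n]. Then every monomial v ∈ I can be written uniquely as v = u·w where u ∈ G(I) and w is a monomial in K[x_{m(u)},...,x_n]; equivalently, I = ⊕_{u ∈ G(I)} u·K[x_{m(u)},...,x_n] as K-vector spaces. -/
open MvPolynomial

noncomputable section

variable {K : Type*} [Field K] {n : ℕ}

namespace EKAux

variable {K : Type*} [Field K] {n : ℕ}

/-- Weighted degree measure: strictly decreases when we move a unit of exponent
from a larger variable index to a smaller one. -/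
def mu {n : ℕ} (u : Fin n →₀ ℕ) : ℕ := ∑ i, u i * ((i : ℕ) + 1)

lemma mu_add (a b : Fin n →₀ ℕ) : mu (a + b) = mu a + mu b := by
  simp [mu, Finsupp.add_apply, add_mul, Finset.sum_add_distrib]

lemma mu_single (j : Fin n) : mu (Finsupp.single j (1 : ℕ)) = (j : ℕ) + 1 := by
  simp [mu, Finsupp.single_apply]

lemma mu_mono {a b : Fin n →₀ ℕ} (h : a ≤ b) : mu a ≤ mu b := by
  refine Finset.sum_le_sum fun i _ => ?_
  exact Nat.mul_le_mul_right _ (h i)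

lemma mu_strict_mono {a b : Fin n →₀ ℕ} (h : a ≤ b) (hne : a ≠ b) : mu a < mu b := by
  have : ∃ j, a j < b j := by
    by_contra hc
    push_neg at hc
    exact hne (Finsupp.ext fun j => le_antisymm (h j) (hc j))
  obtain ⟨j, hj⟩ := this
  refine Finset.sum_lt_sum (fun i _ => Nat.mul_le_mul_right _ (h i)) ⟨j, Finset.mem_univ j, ?_⟩
  exact Nat.mul_lt_mul_of_pos_right hj (Nat.succ_pos _)

lemma exists_minGen (I : Ideal (MvPolynomial (Fin n) K)) :
    ∀ N : ℕ, ∀ z : Fin n →₀ ℕ, mu z ≤ N → monomial z (1 : K) ∈ I →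
      ∃ u ∈ minGens I, u ≤ z := by
  intro N
  induction N using Nat.strong_induction_on with
  | _ N IH =>
    intro z hz hzI
    by_cases hmin : z ∈ minGens I
    · exact ⟨z, hmin, le_rfl⟩
    · have : ∃ y, y ≤ z ∧ y ≠ z ∧ monomial y (1 : K) ∈ I := by
        by_contra hc
        push_neg at hc
        exact hmin ⟨hzI, fun y hy hne => hc y hy hne⟩
      obtain ⟨y, hyz, hyne, hyI⟩ := this
      have hlt : mu y < mu z := mu_strict_mono hyz hyne
      obtain ⟨u, hu, huy⟩ := IH (mu y) (lt_of_lt_of_le hlt hz) y le_rfl hyI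
      exact ⟨u, hu, le_trans huy hyz⟩

lemma notMem_support_of_lt_maxIdx {w u : Fin n →₀ ℕ}
    (hc : ∀ i ∈ w.support, maxIdx u ≤ (i : ℕ) + 1) {j : Fin n}
    (hj : (j : ℕ) + 1 < maxIdx u) : w j = 0 := by
  by_contra hw
  exact absurd (hc j (Finsupp.mem_support_iff.mpr hw)) (by omega)

lemma apply_eq_zero_of_maxIdx_lt {u : Fin n →₀ ℕ} {j : Fin n}
    (hj : maxIdx u < (j : ℕ) + 1) : u j = 0 := by
  by_contra hu
  have h2 : (j : ℕ) + 1 ≤ maxIdx u :=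
    Finset.le_sup (f := fun i : Fin n => (i : ℕ) + 1) (Finsupp.mem_support_iff.mpr hu)
  omega

/-- One-sided comparison: given two admissible decompositions with suitable ordering
of the data, the first generator divides the second. -/
lemma le_of_decomp {u1 w1 u2 w2 : Fin n →₀ ℕ} (h : u1 + w1 = u2 + w2)
    (h1 : ∀ i ∈ w1.support, maxIdx u1 ≤ (i : ℕ) + 1)
    (h2 : ∀ i ∈ w2.support, maxIdx u2 ≤ (i : ℕ) + 1)
    (hc : maxIdx u1 < maxIdx u2 ∨
      (maxIdx u1 = maxIdx u2 ∧ ∀ j : Fin n, (j : ℕ) + 1 = maxIdx u1 → u1 j ≤ u2 j)) :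
    u1 ≤ u2 := by
  intro j
  have hsum : u1 j + w1 j = u2 j + w2 j := by
    have := DFunLike.congr_fun h j
    simpa [Finsupp.add_apply] using this
  rcases lt_trichotomy ((j : ℕ) + 1) (maxIdx u1) with hlt | heq | hgt
  · -- below both tops: w1 j = w2 j = 0
    have hw1 : w1 j = 0 := notMem_support_of_lt_maxIdx h1 hlt
    have hw2 : w2 j = 0 := notMem_support_of_lt_maxIdx h2 (by omega)
    omega
  · rcases hc with hlt2 | ⟨heq2, htop⟩
    · have hw2 : w2 j = 0 := notMem_support_of_lt_maxIdx h2 (by omega)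
      omega
    · exact htop j heq
  · have : u1 j = 0 := apply_eq_zero_of_maxIdx_lt hgt
    omega

lemma eq_of_le_minGens {I : Ideal (MvPolynomial (Fin n) K)} {u1 u2 : Fin n →₀ ℕ}
    (hu1 : u1 ∈ minGens I) (hu2 : u2 ∈ minGens I) (h : u1 ≤ u2) : u1 = u2 := by
  by_contra hne
  exact hu2.2 u1 h hne hu1.1

lemma decomp_unique {I : Ideal (MvPolynomial (Fin n) K)} {u1 w1 u2 w2 : Fin n →₀ ℕ}
    (hu1 : u1 ∈ minGens I) (hu2 : u2 ∈ minGens I) (h : u1 + w1 = u2 + w2)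
    (h1 : ∀ i ∈ w1.support, maxIdx u1 ≤ (i : ℕ) + 1)
    (h2 : ∀ i ∈ w2.support, maxIdx u2 ≤ (i : ℕ) + 1) : u1 = u2 ∧ w1 = w2 := by
  have hmain : u1 = u2 := by
    rcases lt_trichotomy (maxIdx u1) (maxIdx u2) with hlt | heq | hgt
    · exact eq_of_le_minGens hu1 hu2 (le_of_decomp h h1 h2 (Or.inl hlt))
    · -- same top; compare at the top variable
      have htot : (∀ j : Fin n, (j : ℕ) + 1 = maxIdx u1 → u1 j ≤ u2 j) ∨
          (∀ j : Fin n, (j : ℕ) + 1 = maxIdx u2 → u2 j ≤ u1 j) := by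
        by_contra hcon
        push_neg at hcon
        obtain ⟨⟨j1, hj1, hj1'⟩, ⟨j2, hj2, hj2'⟩⟩ := hcon
        have : j1 = j2 := Fin.ext (by omega)
        subst this
        omega
      rcases htot with ht | ht
      · exact eq_of_le_minGens hu1 hu2 (le_of_decomp h h1 h2 (Or.inr ⟨heq, ht⟩))
      · exact (eq_of_le_minGens hu2 hu1
          (le_of_decomp h.symm h2 h1 (Or.inr ⟨heq.symm, ht⟩))).symm
    · exact (eq_of_le_minGens hu2 hu1 (le_of_decomp h.symm h2 h1 (Or.inl hgt))).symm
  subst hmain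
  refine ⟨rfl, Finsupp.ext fun j => ?_⟩
  have := DFunLike.congr_fun h j
  simp only [Finsupp.add_apply] at this
  omega

lemma maxIdx_eq_max' (u : Fin n →₀ ℕ) (h : u.support.Nonempty) :
    maxIdx u = ((u.support.max' h : Fin n) : ℕ) + 1 := by
  apply le_antisymm
  · apply Finset.sup_le
    intro i hi
    have : i ≤ u.support.max' h := Finset.le_max' _ i hi
    omega
  · exact Finset.le_sup (f := fun i : Fin n => (i : ℕ) + 1) (u.support.max'_mem h)

lemma exists_decomp (I : Ideal (MvPolynomial (Fin n) K)) (hst : IsStable I)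
    (v : Fin n →₀ ℕ) :
    ∀ N : ℕ, ∀ u : Fin n →₀ ℕ, mu u ≤ N → u ∈ minGens I → u ≤ v →
      ∃ p : (Fin n →₀ ℕ) × (Fin n →₀ ℕ), p.1 ∈ minGens I ∧ v = p.1 + p.2 ∧
        ∀ i ∈ p.2.support, maxIdx p.1 ≤ (i : ℕ) + 1 := by
  intro N
  induction N using Nat.strong_induction_on with
  | _ N IH =>
    intro u hmu hu huv
    have hvw : u + (v - u) = v := add_tsub_cancel_of_le huv
    by_cases hgood : ∀ i ∈ (v - u).support, maxIdx u ≤ (i : ℕ) + 1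
    · exact ⟨(u, v - u), hu, hvw.symm, hgood⟩
    · push_neg at hgood
      obtain ⟨i, hi, hilt⟩ := hgood
      have hwi : 0 < (v - u) i := Nat.pos_of_ne_zero (Finsupp.mem_support_iff.mp hi)
      have hvi : u i + 1 ≤ v i := by
        have := DFunLike.congr_fun hvw i
        simp only [Finsupp.add_apply] at this
        omega
      -- the support of u is nonempty since maxIdx u > i + 1 ≥ 1
      have hne : u.support.Nonempty := by
        rcases Finset.eq_empty_or_nonempty u.support with he | hne
        · exfalso
          have : maxIdx u = 0 := by rw [maxIdx, he]; simp
          omega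
        · exact hne
      set m : Fin n := u.support.max' hne with hm
      have hMeq : maxIdx u = (m : ℕ) + 1 := maxIdx_eq_max' u hne
      have him : i < m := by
        rw [Fin.lt_def]
        omega
      have hstep : monomial (u - Finsupp.single m 1 + Finsupp.single i 1) (1 : K) ∈ I :=
        hst u hu m (u.support.max'_mem hne) (fun k hk => Finset.le_max' _ k hk) i him
      set u' : Fin n →₀ ℕ := u - Finsupp.single m 1 + Finsupp.single i 1 with hu'
      have hum : 1 ≤ u m := Nat.pos_of_ne_zero
        (Finsupp.mem_support_iff.mp (u.support.max'_mem hne))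
      have hsingle_le : Finsupp.single m 1 ≤ u := by
        intro j
        rcases eq_or_ne j m with rfl | hj
        · simpa using hum
        · simp [Finsupp.single_apply, Ne.symm hj]
      have hrec : (u - Finsupp.single m 1) + Finsupp.single m 1 = u :=
        tsub_add_cancel_of_le hsingle_le
      have hmu' : mu u' < mu u := by
        have h1 : mu u = mu (u - Finsupp.single m 1) + ((m : ℕ) + 1) := by
          conv_lhs => rw [← hrec]
          rw [mu_add, mu_single]
        have h2 : mu u' = mu (u - Finsupp.single m 1) + ((i : ℕ) + 1) := by
          rw [hu', mu_add, mu_single]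
        have : (i : ℕ) < (m : ℕ) := him
        omega
      have hu'v : u' ≤ v := by
        intro j
        have hj1 : (u - Finsupp.single m 1 : Fin n →₀ ℕ) j ≤ u j := by
          rw [Finsupp.tsub_apply]
          omega
        rcases eq_or_ne j i with rfl | hj
        · have h3 : u' j = (u - Finsupp.single m 1 : Fin n →₀ ℕ) j + 1 := by
            rw [hu']
            rw [Finsupp.add_apply, Finsupp.single_eq_same]
          rw [h3]
          have h4 : (u - Finsupp.single m 1 : Fin n →₀ ℕ) j = u j := by
            rw [Finsupp.tsub_apply]
            have hjm : j ≠ m := Fin.ne_of_lt him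
            rw [Finsupp.single_eq_of_ne' (Ne.symm hjm)]
            omega
          omega
        · have h3 : u' j = (u - Finsupp.single m 1 : Fin n →₀ ℕ) j := by
            rw [hu']
            rw [Finsupp.add_apply, Finsupp.single_eq_of_ne' (Ne.symm hj)]
            omega
          rw [h3]
          exact le_trans hj1 (huv j)
      obtain ⟨u'', hu'', hu''le⟩ := exists_minGen I (mu u') u' le_rfl hstep
      have hu''lt : mu u'' < mu u := lt_of_le_of_lt (mu_mono hu''le) hmu'
      exact IH (mu u'') (by omega) u'' le_rfl hu'' (le_trans hu''le hu'v)

end EKAux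

/-- Eliahou–Kervaire decomposition: every monomial of a stable monomial ideal
factors uniquely as `u ⋅ w` with `u` a minimal generator and `w ∈ K[x_{m(u)},…,x_n]`. -/
theorem stmt5 {K : Type*} [Field K] {n : ℕ} (I : Ideal (MvPolynomial (Fin n) K))
    (hmon : IsMonomialIdeal I) (hst : IsStable I) :
    ∀ v : Fin n →₀ ℕ, monomial v (1 : K) ∈ I →
      ∃! p : (Fin n →₀ ℕ) × (Fin n →₀ ℕ), p.1 ∈ minGens I ∧ v = p.1 + p.2 ∧
        ∀ i ∈ p.2.support, maxIdx p.1 ≤ (i : ℕ) + 1 := by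
  intro v hv
  obtain ⟨u0, hu0, hu0v⟩ := EKAux.exists_minGen I (EKAux.mu v) v le_rfl hv
  obtain ⟨p, hp1, hp2, hp3⟩ := EKAux.exists_decomp I hst v (EKAux.mu u0) u0 le_rfl hu0 hu0v
  refine ⟨p, ⟨hp1, hp2, hp3⟩, ?_⟩
  rintro q ⟨hq1, hq2, hq3⟩
  have h : q.1 + q.2 = p.1 + p.2 := by rw [← hq2, ← hp2]
  obtain ⟨he1, he2⟩ := EKAux.decomp_unique hq1 hp1 h hq3 hp3
  exact Prod.ext he1 he2
end
end

section
/- Let a_d ≥ ... ≥ a_1 ≥ -1 and b_d ≥ ... ≥ b_1 ≥ -1 be integers. Then C(a_d + d, d) + ... + C(a_1 + 1, 1) > C(b_d + d, d) + ... + C(b_1 + 1, 1) if and only if (a_d,...,a_1) is lexicographically greater than (b_d,...,b_1). -/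
open MvPolynomial

noncomputable section

variable {K : Type*} [Field K] {n : ℕ}

lemma zchoose_mono {x y : ℤ} (h : x ≤ y) (k : ℕ) : zchoose x k ≤ zchoose y k := by
  unfold zchoose
  split_ifs with hx hy hy
  · exact Nat.choose_le_choose k (Int.toNat_le_toNat h)
  · omega
  · exact Nat.zero_le _
  · exact le_refl _

lemma zchoose_pascal {x : ℤ} (hx : 0 ≤ x) (k : ℕ) :
    zchoose (x + 1) (k + 1) = zchoose x k + zchoose x (k + 1) := by
  unfold zchoose
  rw [if_pos (by omega), if_pos hx, if_pos hx]
  have h : (x + 1).toNat = x.toNat + 1 := by omega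
  rw [h, Nat.choose_succ_succ']

/-- partial sum of binomial coefficients -/
def zsum (c : ℕ → ℤ) (k : ℕ) : ℕ :=
  ∑ i ∈ Finset.range k, zchoose (c i + ((i : ℤ) + 1)) (i + 1)

lemma zsum_lt (k : ℕ) : ∀ (m : ℤ) (b : ℕ → ℤ), -1 ≤ m →
    (∀ i, i < k → -1 ≤ b i) → (∀ i j, i ≤ j → j < k → b i ≤ b j) →
    (∀ i, i < k → b i ≤ m) → zsum b k < zchoose (m + 1 + k) k := by
  induction k with
  | zero =>
    intro m b hm _ _ _
    simp only [zsum, Finset.range_zero, Finset.sum_empty, zchoose]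
    split_ifs with h
    · simp
    · omega
  | succ k ih =>
    intro m b hm hb hmono hle
    have hbk : -1 ≤ b k := hb k (by omega)
    have hbm : b k ≤ m := hle k (by omega)
    have h1 : zsum b k < zchoose (b k + 1 + k) k :=
      ih (b k) b hbk (fun i hi => hb i (by omega))
        (fun i j hij hj => hmono i j hij (by omega))
        (fun i hi => hmono i k (by omega) (by omega))
    have hsum : zsum b (k + 1) = zsum b k + zchoose (b k + ((k : ℤ) + 1)) (k + 1) := by
      simp [zsum, Finset.sum_range_succ]
    have hp : zchoose (b k + k + 1 + 1) (k + 1) =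
        zchoose (b k + k + 1) k + zchoose (b k + k + 1) (k + 1) :=
      zchoose_pascal (by omega) k
    have h2 : zchoose (b k + k + 1 + 1) (k + 1) ≤ zchoose (m + 1 + (k + 1 : ℕ)) (k + 1) :=
      zchoose_mono (by push_cast; omega) _
    have e1 : zchoose (b k + ((k : ℤ) + 1)) (k + 1) = zchoose (b k + k + 1) (k + 1) := by
      ring_nf
    have e2 : zchoose (b k + 1 + k) k = zchoose (b k + k + 1) k := by ring_nf
    calc zsum b (k + 1) = zsum b k + zchoose (b k + ((k : ℤ) + 1)) (k + 1) := hsum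
      _ < zchoose (b k + 1 + k) k + zchoose (b k + ((k : ℤ) + 1)) (k + 1) := by omega
      _ = zchoose (b k + k + 1) k + zchoose (b k + k + 1) (k + 1) := by rw [e2, e1]
      _ = zchoose (b k + k + 1 + 1) (k + 1) := hp.symm
      _ ≤ zchoose (m + 1 + ((k : ℕ) + 1 : ℕ)) (k + 1) := zchoose_mono (by push_cast; omega) _

lemma zsum_gt (d : ℕ) (a b : ℕ → ℤ)
    (hmb : ∀ i j, i ≤ j → j < d + 1 → b i ≤ b j)
    (ha : ∀ i, i < d + 1 → -1 ≤ a i) (hb : ∀ i, i < d + 1 → -1 ≤ b i)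
    (h : b d < a d) : zsum b (d + 1) < zsum a (d + 1) := by
  have h1 : zsum b (d + 1) < zchoose (b d + 1 + (d + 1 : ℕ)) (d + 1) :=
    zsum_lt (d + 1) (b d) b (hb d (by omega)) hb hmb
      (fun i hi => hmb i d (by omega) (by omega))
  have h2 : zchoose (b d + 1 + (d + 1 : ℕ)) (d + 1) ≤
      zchoose (a d + ((d : ℤ) + 1)) (d + 1) :=
    zchoose_mono (by push_cast; omega) _
  have h3 : zsum a (d + 1) = zsum a d + zchoose (a d + ((d : ℤ) + 1)) (d + 1) := by
    simp [zsum, Finset.sum_range_succ]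
  omega

lemma zsum_iff (d : ℕ) : ∀ (a b : ℕ → ℤ),
    (∀ i j, i ≤ j → j < d → a i ≤ a j) → (∀ i j, i ≤ j → j < d → b i ≤ b j) →
    (∀ i, i < d → -1 ≤ a i) → (∀ i, i < d → -1 ≤ b i) →
    (zsum a d > zsum b d ↔ ∃ i, i < d ∧ b i < a i ∧ ∀ j, i < j → j < d → a j = b j) := by
  induction d with
  | zero =>
    intro a b _ _ _ _
    simp [zsum]
  | succ d ih =>
    intro a b hma hmb ha hb
    rcases lt_trichotomy (a d) (b d) with hlt | heq | hgt
    · constructor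
      · intro h
        exact absurd (zsum_gt d b a hma hb ha hlt) (by omega)
      · rintro ⟨i, hi, hba, hj⟩
        rcases Nat.lt_or_ge i d with hid | hid
        · exact absurd (hj d hid (by omega)) (by omega)
        · have hid2 : i = d := by omega
          subst hid2
          omega
    · have hsum : ∀ c : ℕ → ℤ, zsum c (d + 1) =
          zsum c d + zchoose (c d + ((d : ℤ) + 1)) (d + 1) := by
        intro c; simp [zsum, Finset.sum_range_succ]
      have hiff := ih a b (fun i j hij hj => hma i j hij (by omega))
        (fun i j hij hj => hmb i j hij (by omega))
        (fun i hi => ha i (by omega)) (fun i hi => hb i (by omega))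
      rw [hsum a, hsum b, heq]
      constructor
      · intro h
        have : zsum a d > zsum b d := by omega
        obtain ⟨i, hi, hba, hj⟩ := hiff.mp this
        exact ⟨i, by omega, hba, fun j hj1 hj2 => by
          rcases Nat.lt_or_ge j d with hjd | hjd
          · exact hj j hj1 hjd
          · have : j = d := by omega
            rw [this]; exact heq⟩
      · rintro ⟨i, hi, hba, hj⟩
        have hid : i < d := by
          rcases Nat.lt_or_ge i d with h' | h'
          · exact h'
          · exfalso
            have hid2 : i = d := by omega
            subst hid2
            omega
        have : zsum a d > zsum b d :=
          hiff.mpr ⟨i, hid, hba, fun j hj1 hj2 => hj j hj1 (by omega)⟩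
        omega
    · constructor
      · intro _
        exact ⟨d, by omega, hgt, fun j hj1 hj2 => by omega⟩
      · intro _
        exact zsum_gt d a b hmb ha hb hgt

/-- Lemma 4.1: comparison of sums of binomial coefficients is lexicographic
comparison of the coefficient sequences. -/
theorem stmt10 {d : ℕ} (a b : Fin d → ℤ) (hma : Monotone a) (hmb : Monotone b)
    (ha : ∀ i, -1 ≤ a i) (hb : ∀ i, -1 ≤ b i) :
    (∑ i : Fin d, zchoose (a i + ((i : ℕ) + 1)) ((i : ℕ) + 1)) >
      (∑ i : Fin d, zchoose (b i + ((i : ℕ) + 1)) ((i : ℕ) + 1)) ↔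
    ∃ i, b i < a i ∧ ∀ j, i < j → a j = b j := by
  set a' : ℕ → ℤ := fun i => if h : i < d then a ⟨i, h⟩ else 0 with ha'
  set b' : ℕ → ℤ := fun i => if h : i < d then b ⟨i, h⟩ else 0 with hb'
  have hsa : (∑ i : Fin d, zchoose (a i + ((i : ℕ) + 1)) ((i : ℕ) + 1)) = zsum a' d := by
    rw [zsum, ← Fin.sum_univ_eq_sum_range (fun i => zchoose (a' i + ((i : ℤ) + 1)) (i + 1)) d]
    refine Finset.sum_congr rfl fun i _ => ?_
    simp [ha', i.isLt]
  have hsb : (∑ i : Fin d, zchoose (b i + ((i : ℕ) + 1)) ((i : ℕ) + 1)) = zsum b' d := by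
    rw [zsum, ← Fin.sum_univ_eq_sum_range (fun i => zchoose (b' i + ((i : ℤ) + 1)) (i + 1)) d]
    refine Finset.sum_congr rfl fun i _ => ?_
    simp [hb', i.isLt]
  rw [hsa, hsb, gt_iff_lt, ← gt_iff_lt,
    zsum_iff d a' b'
      (fun i j hij hj => by
        simp only [ha', dif_pos hj, dif_pos (lt_of_le_of_lt hij hj)]
        exact hma (show (⟨i, _⟩ : Fin d) ≤ ⟨j, hj⟩ from hij))
      (fun i j hij hj => by
        simp only [hb', dif_pos hj, dif_pos (lt_of_le_of_lt hij hj)]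
        exact hmb (show (⟨i, _⟩ : Fin d) ≤ ⟨j, hj⟩ from hij))
      (fun i hi => by simp only [ha', dif_pos hi]; exact ha _)
      (fun i hi => by simp only [hb', dif_pos hi]; exact hb _)]
  constructor
  · rintro ⟨i, hi, hba, hj⟩
    refine ⟨⟨i, hi⟩, ?_, fun j hij => ?_⟩
    · simpa [ha', hb', hi] using hba
    · have := hj j hij j.isLt
      simpa [ha', hb', j.isLt] using this
  · rintro ⟨i, hba, hj⟩
    refine ⟨i, i.isLt, by simpa [ha', hb', i.isLt] using hba, fun j hij hjd => ?_⟩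
    have := hj ⟨j, hjd⟩ hij
    simpa [ha', hb', hjd] using this
end
end

section
/- Let 0 = a_0 < a_1 ≤ ... ≤ a_n ≤ d be integers, a = Σ_{j=1}^{n} C(d - a_j + n - j, n - j), and s = min{k ≤ n-1 : a_k = a_{n-1}}. Then a = Σ_{j=1}^{s-1} C(d - a_j + n - j, n - j) + C(d - (a_s - 1) + n - s, n - s), and this expression is the (n-1)-st Macaulay representation of a. -/
open MvPolynomial

noncomputable section

variable {K : Type*} [Field K] {n : ℕ}

lemma keysum16 (x : ℕ) : ∀ (k n s : ℕ), s + k = n →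
    (∑ j ∈ Finset.Icc s n, Nat.choose (x + (n - j)) (n - j)) = Nat.choose (x + 1 + k) k := by
  intro k
  induction k with
  | zero =>
    intro n s h
    have : s = n := by omega
    subst this
    simp
  | succ k ih =>
    intro n s h
    have hsn : s ≤ n := by omega
    rw [Finset.Icc_eq_cons_Ioc hsn, Finset.sum_cons, ← Finset.Icc_add_one_left_eq_Ioc,
      ih n (s + 1) (by omega)]
    have h1 : n - s = k + 1 := by omega
    rw [h1]
    have h2 : x + 1 + k = x + (k + 1) := by omega
    rw [h2]
    have h3 : x + 1 + (k + 1) = (x + (k + 1)) + 1 := by omega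
    rw [h3, Nat.choose_succ_succ' (x + (k + 1)) k]
    omega

lemma sum_reflect16 (F : ℕ → ℕ) (p q n : ℕ) (hq : q ≤ n) (hp : p ≤ n) :
    ∑ j ∈ Finset.Icc p q, F (n - j) = ∑ m ∈ Finset.Icc (n - q) (n - p), F m := by
  refine Finset.sum_nbij' (fun j => n - j) (fun m => n - m) ?_ ?_ ?_ ?_ ?_ <;>
      intro x hx <;> simp only [Finset.mem_Icc] at hx ⊢ <;> omega

/-- Lemma 4.8: with `0 = a_0 < a_1 ≤ ⋯ ≤ a_n ≤ d`,
`a = Σ_{j=1}^n C(d - a_j + n - j, n - j)` and `s = min{k ≤ n-1 : a_k = a_{n-1}}`, one has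
`a = Σ_{j=1}^{s-1} C(d - a_j + n - j, n - j) + C(d - (a_s - 1) + n - s, n - s)`, and this
is the `(n-1)`-st Macaulay representation of `a`. -/
theorem stmt16 {n d : ℕ} (hn : 2 ≤ n) (a : ℕ → ℕ) (h0 : a 0 = 0)
    (hmono : ∀ j, j < n → a j ≤ a (j + 1)) (hpos : 0 < a 1) (had : a n ≤ d)
    (s : ℕ) (hs : s = sInf {k | a k = a (n - 1)}) :
    (∑ j ∈ Finset.Icc 1 n, Nat.choose (d - a j + (n - j)) (n - j)) =
      (∑ j ∈ Finset.Icc 1 (s - 1), Nat.choose (d - a j + (n - j)) (n - j)) +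
        Nat.choose (d - (a s - 1) + (n - s)) (n - s) ∧
    IsMacaulayRep (∑ j ∈ Finset.Icc 1 n, Nat.choose (d - a j + (n - j)) (n - j))
      (n - 1) (n - s) (fun m => if m = n - s then d - a s + 1 else d - a (n - m)) := by
  
  have hmono' : ∀ i j, i ≤ j → j ≤ n → a i ≤ a j := by
    intro i j hij hjn
    induction j with
    | zero =>
      have : i = 0 := by omega
      simp [this]
    | succ j ih =>
      rcases Nat.lt_or_ge i (j + 1) with h | h
      · exact le_trans (ih (by omega) (by omega)) (hmono j (by omega))
      · have : i = j + 1 := by omega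
        simp [this]
  have hne : ({k | a k = a (n - 1)} : Set ℕ).Nonempty := ⟨n - 1, rfl⟩
  have has : a s = a (n - 1) := by rw [hs]; exact Nat.sInf_mem hne
  have hsle : s ≤ n - 1 := hs ▸ Nat.sInf_le rfl
  have hn1pos : 0 < a (n - 1) := lt_of_lt_of_le hpos (hmono' 1 (n - 1) (by omega) (by omega))
  have hs1 : 1 ≤ s := by
    rcases Nat.eq_zero_or_pos s with h | h
    · rw [h, h0] at has; omega
    · exact h
  have hsm1 : a (s - 1) ≠ a (n - 1) := by
    have h' : s - 1 ∉ {k | a k = a (n - 1)} :=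
      Nat.notMem_of_lt_sInf (s := {k | a k = a (n - 1)}) (by omega)
    simpa using h'
  have haj : ∀ j, s ≤ j → j ≤ n - 1 → a j = a s := by
    intro j h1 h2
    have := hmono' s j h1 (by omega)
    have := hmono' j (n - 1) h2 (by omega)
    omega
  have hasd : a s ≤ d := le_trans (hmono' s n (by omega) le_rfl) had
  have hsp : 1 ≤ a s := lt_of_lt_of_le hpos (hmono' 1 s hs1 (by omega))
  have hajd : ∀ j, j ≤ n → a j ≤ d := fun j hj => le_trans (hmono' j n hj le_rfl) had
  -- Claim 1
  have hsplit : (∑ j ∈ Finset.Icc 1 n, Nat.choose (d - a j + (n - j)) (n - j)) =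
      (∑ j ∈ Finset.Icc 1 (s - 1), Nat.choose (d - a j + (n - j)) (n - j)) +
        (∑ j ∈ Finset.Icc s n, Nat.choose (d - a j + (n - j)) (n - j)) := by
    have e1 : Finset.Icc 1 n = Finset.Ioc 0 n := by rw [← Finset.Icc_add_one_left_eq_Ioc]; rfl
    have e2 : Finset.Icc 1 (s - 1) = Finset.Ioc 0 (s - 1) := by rw [← Finset.Icc_add_one_left_eq_Ioc]; rfl
    have e3 : Finset.Icc s n = Finset.Ioc (s - 1) n := by
      rw [← Finset.Icc_add_one_left_eq_Ioc]
      congr 1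
      omega
    rw [e1, e2, e3, Finset.sum_Ioc_consecutive _ (by omega : 0 ≤ s - 1) (by omega : s - 1 ≤ n)]
  have htail : (∑ j ∈ Finset.Icc s n, Nat.choose (d - a j + (n - j)) (n - j)) =
      Nat.choose (d - (a s - 1) + (n - s)) (n - s) := by
    have e4 : ∀ j ∈ Finset.Icc s n, Nat.choose (d - a j + (n - j)) (n - j) =
        Nat.choose ((d - a s) + (n - j)) (n - j) := by
      intro j hj
      simp only [Finset.mem_Icc] at hj
      rcases Nat.lt_or_ge j n with h | h
      · have : a j = a s := haj j hj.1 (by omega)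
        rw [this]
      · have : j = n := by omega
        subst this
        simp
    rw [Finset.sum_congr rfl e4, keysum16 (d - a s) (n - s) n s (by omega)]
    congr 1
    omega
  have claim1 : (∑ j ∈ Finset.Icc 1 n, Nat.choose (d - a j + (n - j)) (n - j)) =
      (∑ j ∈ Finset.Icc 1 (s - 1), Nat.choose (d - a j + (n - j)) (n - j)) +
        Nat.choose (d - (a s - 1) + (n - s)) (n - s) := by
    rw [hsplit, htail]
  refine ⟨claim1, ?_, ?_, ?_, ?_⟩
  · omega
  · omega
  · -- monotonicity of c
    intro j hj1 hj2
    have hj1ne : j + 1 ≠ n - s := by omega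
    rcases Nat.eq_or_lt_of_le hj1 with h | h
    · subst h
      simp only [if_pos rfl, if_true, if_neg hj1ne]
      have h5 : n - (n - s + 1) = s - 1 := by omega
      rw [h5]
      have : a (s - 1) ≤ a s := hmono' (s - 1) s (by omega) (by omega)
      omega
    · have hjne : j ≠ n - s := by omega
      simp only [if_neg hjne, if_neg hj1ne]
      have : a (n - (j + 1)) ≤ a (n - j) := hmono' (n - (j + 1)) (n - j) (by omega) (by omega)
      omega
  · -- the sum
    rw [claim1]
    have hnsn1 : n - s ≤ n - 1 := by omega
    rw [Finset.Icc_eq_cons_Ioc hnsn1, Finset.sum_cons]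
    simp only [if_pos rfl, if_true]
    have e6 : ∀ j ∈ Finset.Ioc (n - s) (n - 1),
        Nat.choose ((if j = n - s then d - a s + 1 else d - a (n - j)) + j) j =
          (fun m => Nat.choose (d - a m + (n - m)) (n - m)) (n - j) := by
      intro j hj
      simp only [Finset.mem_Ioc] at hj
      have hne' : j ≠ n - s := by omega
      simp only [if_neg hne']
      have : n - (n - j) = j := by omega
      rw [this]
    rw [Finset.sum_congr rfl e6, ← Finset.Icc_add_one_left_eq_Ioc,
      sum_reflect16 (fun m => Nat.choose (d - a m + (n - m)) (n - m)) (n - s + 1) (n - 1) n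
        (by omega) (by omega)]
    have e7 : n - (n - 1) = 1 := by omega
    have e8 : n - (n - s + 1) = s - 1 := by omega
    rw [e7, e8]
    have e9 : Nat.choose (d - a s + 1 + (n - s)) (n - s) =
        Nat.choose (d - (a s - 1) + (n - s)) (n - s) := by
      congr 1
      omega
    rw [e9]
    omega
end
end
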